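/- arXiv:1506.04341 — 5 statements merged into one kernel-verified Lean document; each statement's English description precedes it below -/
import Mathlib

section
/- Let (A,L) be a unital Lipschitz pair whose Monge–Kantorovich metric mk_L has finite diameter D on the state space S(A). For any cut-off r ≥ D, the bounded-Lipschitz metric bl_{L,r}(φ,ψ) = sup{|φ(a)-ψ(a)| : a ∈ sa(A), L(a) ≤ 1, ‖a‖ ≤ r} coincides with mk_L on S(A). -/
open scoped ENNReal NNReal ComplexOrder Pointwise

variable {A : Type*} [NormedRing A] [StarRing A] [CStarRing A]
  [NormedAlgebra ℂ A] [CompleteSpace A] [StarModule ℂ A]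

/-- A state on a unital C*-algebra. -/
def IsState (φ : A →L[ℂ] ℂ) : Prop :=
  φ 1 = 1 ∧ ∀ a : A, 0 ≤ φ (star a * a)

-- Lemma A : states are hermitian on selfadjoint elements
lemma state_apply_real (ψ : A →L[ℂ] ℂ) (hψ : IsState ψ) {a : A} (ha : IsSelfAdjoint a) :
    ψ a = ((ψ a).re : ℂ) := by
  have h1 : 0 ≤ ψ (star (1 + a) * (1 + a)) := hψ.2 (1 + a)
  have h2 : 0 ≤ ψ (star a * a) := hψ.2 a
  have key : star (1 + a) * (1 + a) = 1 + a + a + a * a := by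
    rw [star_add, star_one, ha.star_eq]; noncomm_ring
  rw [key] at h1
  rw [ha.star_eq] at h2
  have h1im : (ψ (1 + a + a + a * a)).im = 0 := by
    rw [Complex.le_def] at h1; simpa using h1.2.symm
  have h2im : (ψ (a * a)).im = 0 := by
    rw [Complex.le_def] at h2; simpa using h2.2.symm
  have hone : ψ (1 : A) = 1 := hψ.1
  have : (ψ a).im = 0 := by
    simp only [map_add, Complex.add_im, hone] at h1im
    simp only [h2im, Complex.one_im] at h1im
    linarith
  exact (Complex.re_add_im (ψ a)).symm.trans (by rw [this]; simp)

-- Lemma B : a norm-contractive unital functional is a state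
lemma isState_of_contractive (g : A →L[ℂ] ℂ) (hg1 : g 1 = 1)
    (hgn : ∀ x : A, ‖g x‖ ≤ ‖x‖) : IsState g := by
  have : Nontrivial A := by
    refine ⟨1, 0, fun h => ?_⟩
    rw [h, map_zero] at hg1
    exact one_ne_zero hg1.symm
  letI : CStarAlgebra A := ⟨⟩
  refine ⟨hg1, fun a => ?_⟩
  set x := star a * a with hx_def
  have hx : IsSelfAdjoint x := IsSelfAdjoint.star_mul_self a
  set n := ‖x‖ with hn_def
  have hn : 0 ≤ n := norm_nonneg x
  set c : ℂ := ((n / 2 : ℝ) : ℂ) with hc_def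
  set h : A := x - c • 1 with hh_def
  clear_value h
  have hcsa : IsSelfAdjoint (c • (1 : A)) := by
    rw [IsSelfAdjoint, star_smul, star_one, hc_def, Complex.star_def, Complex.conj_ofReal]
  have hhsa : IsSelfAdjoint h := by rw [hh_def]; exact hx.sub hcsa
  -- ‖h‖ ≤ n/2
  have hnorm_h : ‖h‖ ≤ n / 2 := by
    have hrad : spectralRadius ℂ h = ‖h‖₊ := hhsa.spectralRadius_eq_nnnorm
    have hbound : spectralRadius ℂ h ≤ ENNReal.ofReal (n / 2) := by
      rw [spectralRadius]
      refine iSup₂_le fun z hz => ?_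
      obtain ⟨μ, hμ, rfl⟩ : ∃ μ ∈ spectrum ℂ x, μ - c = z := by
        have h1 : z ∈ spectrum ℂ x - ({c} : Set ℂ) := by
          rw [spectrum.sub_singleton_eq]
          have hxa : x - algebraMap ℂ A c = h := by
            rw [hh_def, Algebra.algebraMap_eq_smul_one]
          rwa [hxa]
        rwa [Set.sub_singleton] at h1
      have hμre : μ = ((μ.re : ℝ) : ℂ) := hx.mem_spectrum_eq_re hμ
      have hμ0 : 0 ≤ μ.re := by
        apply spectrum_star_mul_self_nonneg (b := a) μ.re
        apply spectrum.of_algebraMap_mem ℂ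
        show algebraMap ℝ ℂ μ.re ∈ spectrum ℂ (star a * a)
        rw [Complex.coe_algebraMap, ← hμre]
        exact hx_def ▸ hμ
      have hnorm : |μ.re| ≤ n := by
        have h2 := spectrum.norm_le_norm_of_mem hμ
        rw [hμre] at h2
        rwa [Complex.norm_real, Real.norm_eq_abs] at h2
      have hμn : μ.re ≤ n := (abs_le.mp hnorm).2
      have hfin : ‖μ - c‖ ≤ n / 2 := by
        rw [hμre, hc_def, ← Complex.ofReal_sub, Complex.norm_real, Real.norm_eq_abs]
        rw [abs_le]
        constructor <;> linarith
      calc (‖μ - c‖₊ : ℝ≥0∞) ≤ ENNReal.ofReal ‖μ - c‖ := by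
            exact (ENNReal.ofReal_eq_coe_nnreal (norm_nonneg _)).symm.le
        _ ≤ ENNReal.ofReal (n / 2) := ENNReal.ofReal_le_ofReal hfin
    rw [hrad] at hbound
    have := ENNReal.toReal_mono (by simp) hbound
    simpa [ENNReal.toReal_ofReal (by linarith : (0:ℝ) ≤ n / 2)] using this
  -- key inequality for every real t
  have key : ∀ t : ℝ, ‖g h - (t : ℂ) * Complex.I‖ ^ 2 ≤ (n / 2) ^ 2 + t ^ 2 := by
    intro t
    set w : A := ((t : ℂ) * Complex.I) • 1 with hw_def
    clear_value w
    have hw_star : star w = -w := by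
      rw [hw_def, star_smul, star_one, ← neg_smul]
      congr 1
      simp only [Complex.star_def, map_mul, Complex.conj_ofReal, Complex.conj_I]
      ring
    have hstar : star (h - w) = h + w := by
      rw [star_sub, hhsa.star_eq, hw_star, sub_neg_eq_add]
    have hww : (↑t * Complex.I) * (↑t * Complex.I) = -((t : ℂ)^2) := by
      rw [mul_mul_mul_comm, Complex.I_mul_I]
      ring
    have hc1 : ∀ (z : ℂ) (y : A), (z • (1:A)) * y = z • y := fun z y => by
      rw [smul_mul_assoc, one_mul]
    have hc2 : ∀ (z : ℂ) (y : A), y * (z • (1:A)) = z • y := fun z y => by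
      rw [mul_smul_comm, mul_one]
    have hmul : star (h - w) * (h - w) = h * h + ((t : ℂ)^2) • 1 := by
      rw [hstar, hw_def, add_mul, mul_sub, mul_sub, hc2, hc1, hc1, smul_smul, hww,
        neg_smul, sub_neg_eq_add]
      abel
    have hnsq : ‖h - w‖ ^ 2 = ‖h * h + ((t : ℂ)^2) • 1‖ := by
      rw [← hmul, CStarRing.norm_star_mul_self, sq]
    have hbd : ‖h * h + ((t : ℂ)^2) • 1‖ ≤ (n/2)^2 + t^2 := by
      refine (norm_add_le _ _).trans ?_
      have h1 : ‖h * h‖ ≤ (n/2)^2 := by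
        refine (norm_mul_le _ _).trans ?_
        nlinarith [norm_nonneg h]
      have h2 : ‖((t : ℂ)^2) • (1 : A)‖ = t^2 := by
        rw [norm_smul, norm_one, mul_one, ← Complex.ofReal_pow, Complex.norm_real,
          Real.norm_eq_abs, abs_of_nonneg (sq_nonneg t)]
      linarith
    have hgw : g w = (t : ℂ) * Complex.I := by
      rw [hw_def, map_smul, hg1, smul_eq_mul, mul_one]
    have hgle : ‖g h - (t : ℂ) * Complex.I‖ ≤ ‖h - w‖ := by
      rw [← hgw, ← map_sub]
      exact hgn _
    calc ‖g h - (t : ℂ) * Complex.I‖ ^ 2 ≤ ‖h - w‖ ^ 2 := by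
          exact pow_le_pow_left₀ (norm_nonneg _) hgle 2
      _ = ‖h * h + ((t : ℂ)^2) • 1‖ := hnsq
      _ ≤ (n/2)^2 + t^2 := hbd
  -- extract real and imaginary parts
  set u := (g h).re with hu_def
  set v := (g h).im with hv_def
  have hnormsq : ∀ z : ℂ, ‖z‖ ^ 2 = z.re ^ 2 + z.im ^ 2 := fun z => by
    rw [Complex.sq_norm, Complex.normSq_apply]; ring
  have expand : ∀ t : ℝ, u^2 + v^2 - 2*(v*t) ≤ (n/2)^2 := by
    intro t
    have hk := key t
    rw [hnormsq] at hk
    simp only [Complex.sub_re, Complex.sub_im, Complex.mul_re, Complex.mul_im,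
      Complex.ofReal_re, Complex.ofReal_im, Complex.I_re, Complex.I_im] at hk
    nlinarith [hk]
  have hv0 : v = 0 := by
    by_contra hv
    have hvt : v * ((u^2 + v^2 - (n/2)^2 - 1)/(2*v)) = (u^2 + v^2 - (n/2)^2 - 1)/2 := by
      field_simp
    have e := expand ((u^2 + v^2 - (n/2)^2 - 1)/(2*v))
    rw [hvt] at e
    linarith
  have hu : -(n/2) ≤ u := by
    have e := expand 0
    nlinarith [e, hv0]
  have hgx : g x = g h + c := by
    have : x = h + c • 1 := by rw [hh_def]; abel
    rw [this, map_add, map_smul, hg1, smul_eq_mul, mul_one]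
  rw [Complex.le_def]
  constructor
  · rw [hgx]
    simp only [Complex.add_re, Complex.zero_re, hc_def, Complex.ofReal_re]
    rw [← hu_def]
    linarith
  · rw [hgx]
    simp only [Complex.add_im, Complex.zero_im, hc_def, Complex.ofReal_im]
    rw [← hv_def]
    linarith

-- Lemma C : for selfadjoint b, there's a state nearly attaining the norm
lemma exists_state_nnnorm_le {b : A} (hb : IsSelfAdjoint b)
    (ψ : A →L[ℂ] ℂ) (hψ : IsState ψ) :
    ∃ χ : A →L[ℂ] ℂ, IsState χ ∧ ‖b‖₊ ≤ ‖χ b‖₊ := by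
  letI : CStarAlgebra A := ⟨⟩
  have hA : Nontrivial A := by
    refine ⟨1, 0, fun h0 => ?_⟩
    have := hψ.1
    rw [h0, map_zero] at this
    exact one_ne_zero this.symm
  by_cases hsp : ∃ s : ℂ, b = s • 1
  · obtain ⟨s, rfl⟩ := hsp
    refine ⟨ψ, hψ, ?_⟩
    rw [map_smul, hψ.1, smul_eq_mul, mul_one, nnnorm_smul, nnnorm_one, mul_one]
  · -- b and 1 are linearly independent
    obtain ⟨lam, hlam, hlamrad⟩ := spectrum.exists_nnnorm_eq_spectralRadius (a := b)
    have hlamnorm : ‖lam‖₊ = ‖b‖₊ := by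
      have := hb.spectralRadius_eq_nnnorm
      rw [this] at hlamrad
      exact_mod_cast hlamrad
    have hli : LinearIndependent ℂ ![b, (1 : A)] := by
      rw [linearIndependent_fin2]
      refine ⟨by simpa using one_ne_zero' A, fun s hs => hsp ⟨s, ?_⟩⟩
      simpa using hs.symm
    set p : Submodule ℂ A := Submodule.span ℂ (Set.range ![b, (1 : A)]) with hp_def
    have hbmem : b ∈ p := Submodule.subset_span ⟨0, rfl⟩
    have h1mem : (1 : A) ∈ p := Submodule.subset_span ⟨1, rfl⟩
    set B : Module.Basis (Fin 2) ℂ p := Module.Basis.span hli with hB_def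
    set f₀ : p →ₗ[ℂ] ℂ := B.constr ℂ ![lam, (1 : ℂ)] with hf0_def
    have heval : ∀ (s t : ℂ) (hmem : s • b + t • 1 ∈ p),
        f₀ ⟨s • b + t • 1, hmem⟩ = s * lam + t := by
      intro s t hmem
      have hrepr : (⟨s • b + t • 1, hmem⟩ : p) = s • (B 0) + t • (B 1) := by
        apply Subtype.ext
        push_cast
        rw [Module.Basis.span_apply, Module.Basis.span_apply]
        simp
      rw [hrepr, map_add, map_smul, map_smul, Module.Basis.constr_basis, Module.Basis.constr_basis]
      simp [smul_eq_mul]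
    have hrange : Set.range ![b, (1 : A)] = {b, 1} := by
      ext y
      simp [Matrix.range_cons, Matrix.range_empty, or_comm]
    have hbound : ∀ x : p, ‖f₀ x‖ ≤ ‖(x : A)‖ := by
      rintro ⟨y, hy⟩
      rw [hp_def, hrange] at hy
      obtain ⟨s, t, hst⟩ := Submodule.mem_span_pair.mp hy
      have hy' : y = s • b + t • 1 := hst.symm
      subst hy'
      rw [heval]
      -- show ‖s * lam + t‖ ≤ ‖s • b + t • 1‖
      by_cases hs : s = 0
      · subst hs
        simp [norm_smul]
      · have hmem : s * lam + t ∈ spectrum ℂ (s • b + t • 1) := by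
          have h1 : s • lam ∈ spectrum ℂ (s • b) := by
            rw [spectrum.smul_eq_smul s b (spectrum.nonempty b)]
            exact ⟨lam, hlam, rfl⟩
          have h2 : t + s * lam ∈ ({t} : Set ℂ) + spectrum ℂ (s • b) := by
            exact Set.add_mem_add rfl h1
          rw [spectrum.singleton_add_eq] at h2
          rw [Algebra.algebraMap_eq_smul_one] at h2
          have : t • (1 : A) + s • b = s • b + t • 1 := by abel
          rw [this] at h2
          rwa [add_comm t (s * lam)] at h2
        exact spectrum.norm_le_norm_of_mem hmem
    set f : p →L[ℂ] ℂ := f₀.mkContinuous 1 (by simpa using hbound) with hf_def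
    obtain ⟨g, hgext, hgnorm⟩ := exists_extension_norm_eq p f
    have hfnorm : ‖f‖ ≤ 1 := f₀.mkContinuous_norm_le zero_le_one (by simpa using hbound)
    have hg1 : g 1 = 1 := by
      have := hgext ⟨1, h1mem⟩
      rw [this]
      have h1repr : (⟨(1 : A), h1mem⟩ : p) = ⟨(0 : ℂ) • b + (1 : ℂ) • 1, by simpa using h1mem⟩ := by
        apply Subtype.ext; simp
      show f₀ _ = 1
      rw [h1repr, heval]
      simp
    have hgb : g b = lam := by
      have := hgext ⟨b, hbmem⟩
      rw [this]
      have hbrepr : (⟨b, hbmem⟩ : p) = ⟨(1 : ℂ) • b + (0 : ℂ) • 1, by simpa using hbmem⟩ := by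
        apply Subtype.ext; simp
      show f₀ _ = lam
      rw [hbrepr, heval]
      simp
    have hgn : ∀ x : A, ‖g x‖ ≤ ‖x‖ := fun x =>
      (g.le_opNorm x).trans (by
        rw [hgnorm]
        exact mul_le_of_le_one_left (norm_nonneg x) hfnorm)
    refine ⟨g, isState_of_contractive g hg1 hgn, ?_⟩
    rw [hgb, hlamnorm]

/-- The Monge–Kantorovich extended metric of a Lipschitz pair `(A, L)`. -/
noncomputable def mkDist (L : A → ℝ≥0∞) (φ ψ : A →L[ℂ] ℂ) : ℝ≥0∞ :=
  ⨆ (a : A) (_ : IsSelfAdjoint a ∧ L a ≤ 1), (‖φ a - ψ a‖₊ : ℝ≥0∞)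

/-- The bounded-Lipschitz metric with cut-off `r` of a Lipschitz pair `(A, L)`. -/
noncomputable def blDist (L : A → ℝ≥0∞) (r : ℝ≥0) (φ ψ : A →L[ℂ] ℂ) : ℝ≥0∞ :=
  ⨆ (a : A) (_ : IsSelfAdjoint a ∧ L a ≤ 1 ∧ ‖a‖₊ ≤ r), (‖φ a - ψ a‖₊ : ℝ≥0∞)

/-- If the Monge–Kantorovich metric of a unital Lipschitz pair `(A, L)` has diameter at most
`D < ∞` on the state space, then for every cut-off `r ≥ D` the bounded-Lipschitz metric
`bl_{L,r}` coincides with the Monge–Kantorovich metric on the state space. -/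
theorem blDist_eq_mkDist_of_diam_le (L : A → ℝ≥0∞)
    (hadd : ∀ a b : A, L (a + b) ≤ L a + L b)
    (hsmul : ∀ (t : ℝ) (a : A), L (t • a) = (‖t‖₊ : ℝ≥0∞) * L a)
    (hker : ∀ a : A, IsSelfAdjoint a → (L a = 0 ↔ ∃ t : ℝ, a = t • (1 : A)))
    (D r : ℝ≥0)
    (hD : ∀ φ ψ : A →L[ℂ] ℂ, IsState φ → IsState ψ → mkDist L φ ψ ≤ (D : ℝ≥0∞))
    (hr : D ≤ r) :
    ∀ φ ψ : A →L[ℂ] ℂ, IsState φ → IsState ψ → blDist L r φ ψ = mkDist L φ ψ := by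
  have coe_smul : ∀ (t : ℝ) (y : A), t • y = ((t : ℂ)) • y := fun t y => by
    rw [← smul_one_smul ℂ t y, Complex.real_smul, mul_one]
  intro φ ψ hφ hψ
  refine le_antisymm ?_ ?_
  · exact iSup₂_le fun a ha => le_iSup₂_of_le a ⟨ha.1, ha.2.1⟩ le_rfl
  · refine iSup₂_le fun a ha => ?_
    set t : ℝ := (ψ a).re with ht_def
    set b : A := a - (t : ℂ) • 1 with hb_def
    have hψa : ψ a = (t : ℂ) := state_apply_real ψ hψ ha.1
    have hbsa : IsSelfAdjoint b := ha.1.sub (by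
      rw [IsSelfAdjoint, star_smul, star_one, Complex.star_def, Complex.conj_ofReal])
    have hL1 : L (1 : A) = 0 :=
      (hker 1 (IsSelfAdjoint.one A)).mpr ⟨1, (one_smul ℝ (1 : A)).symm⟩
    have hLb : L b ≤ 1 := by
      have hbeq : b = a + (-t : ℝ) • 1 := by
        rw [hb_def, coe_smul (-t) 1]
        push_cast
        rw [neg_smul, ← sub_eq_add_neg]
      calc L b = L (a + (-t : ℝ) • 1) := by rw [hbeq]
        _ ≤ L a + L ((-t : ℝ) • 1) := hadd _ _
        _ = L a + ‖(-t : ℝ)‖₊ * L 1 := by rw [hsmul]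
        _ = L a := by rw [hL1, mul_zero, add_zero]
        _ ≤ 1 := ha.2
    have hbnorm : ‖b‖₊ ≤ r := by
      obtain ⟨χ, hχ, hle⟩ := exists_state_nnnorm_le hbsa ψ hψ
      have hχb : χ b = χ a - ψ a := by
        rw [hb_def, map_sub, map_smul, hχ.1, smul_eq_mul, mul_one, hψa]
      have h1 : (‖χ a - ψ a‖₊ : ℝ≥0∞) ≤ mkDist L χ ψ := le_iSup₂_of_le a ha le_rfl
      have h2 : mkDist L χ ψ ≤ D := hD χ ψ hχ hψ
      have h3 : (‖b‖₊ : ℝ≥0∞) ≤ r := by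
        calc (‖b‖₊ : ℝ≥0∞) ≤ (‖χ b‖₊ : ℝ≥0∞) := by exact_mod_cast hle
          _ = ‖χ a - ψ a‖₊ := by rw [hχb]
          _ ≤ D := h1.trans h2
          _ ≤ r := by exact_mod_cast hr
      exact_mod_cast h3
    have hval : φ b - ψ b = φ a - ψ a := by
      rw [hb_def, map_sub, map_sub, map_smul, map_smul, hφ.1, hψ.1]
      simp [smul_eq_mul]
    refine le_iSup₂_of_le b ⟨hbsa, hLb, hbnorm⟩ (le_of_eq ?_)
    rw [hval]
end

section
/- Let (A,L) be a unital Lipschitz pair with mk_L(φ,ψ) ≤ D for all states φ,ψ. Then for every self-adjoint a with L(a) ≤ 1 there exists t ∈ ℝ such that ‖a - t·1‖ ≤ D. -/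
set_option maxHeartbeats 1000000


open scoped ENNReal NNReal ComplexOrder

variable {A : Type*} [NormedRing A] [StarRing A] [CStarRing A]
  [NormedAlgebra ℂ A] [CompleteSpace A] [StarModule ℂ A]

section Aux

open Complex Pointwise

lemma im_eq_zero_of_unital_contractive (φ : A →L[ℂ] ℂ) (hφ : ‖φ‖ ≤ 1) (h1 : φ 1 = 1)
    [Nontrivial A] {y : A} (hy : IsSelfAdjoint y) : (φ y).im = 0 := by
  have key : ∀ t : ℝ, (φ y).re ^ 2 + ((φ y).im + t) ^ 2 ≤ ‖y‖ ^ 2 + t ^ 2 := by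
    intro t
    set c : A := y + ((I * t) • (1 : A)) with hc
    have hsc : star c = y - (I * t) • (1 : A) := by
      simp [hc, hy.star_eq, star_smul, Complex.star_def, map_mul, Complex.conj_I, sub_eq_add_neg,
        neg_smul]
    have hmul : star c * c = y * y + ((t : ℂ) ^ 2) • (1 : A) := by
      have hIt : (I * (t:ℂ)) * (I * t) = -((t : ℂ) ^ 2) := by
        ring_nf
        rw [Complex.I_sq]
        ring
      rw [hsc, hc, sub_mul, mul_add, mul_add, mul_smul_comm, mul_one, smul_mul_assoc, one_mul,
        smul_mul_assoc, one_mul, smul_smul, hIt, neg_smul]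
      abel
    have hnormc : ‖c‖ ^ 2 ≤ ‖y‖ ^ 2 + t ^ 2 := by
      have h1' : ‖c‖ * ‖c‖ = ‖star c * c‖ := (CStarRing.norm_star_mul_self).symm
      have h2' : ‖star c * c‖ ≤ ‖y‖ * ‖y‖ + t ^ 2 := by
        rw [hmul]
        refine le_trans (norm_add_le _ _) ?_
        gcongr
        · exact norm_mul_le y y
        · calc ‖((t : ℂ) ^ 2) • (1 : A)‖ ≤ ‖(t : ℂ) ^ 2‖ * ‖(1 : A)‖ := norm_smul_le _ _
            _ ≤ t ^ 2 * 1 := by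
                have hA : ‖(1 : A)‖ = 1 := CStarRing.norm_one
                have h3 : ‖(t : ℂ) ^ 2‖ = t ^ 2 := by
                  rw [norm_pow]; simp [_root_.sq_abs]
                rw [h3]
                nlinarith [sq_nonneg t]
            _ = t ^ 2 := mul_one _
      nlinarith [norm_nonneg c]
    have hφc : φ c = φ y + I * t := by
      simp [hc, map_add, map_smul, h1, smul_eq_mul]
    have hb : ‖φ c‖ ≤ ‖c‖ := by
      calc ‖φ c‖ ≤ ‖φ‖ * ‖c‖ := φ.le_opNorm c
        _ ≤ 1 * ‖c‖ := by gcongr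
        _ = ‖c‖ := one_mul _
    have habs : ‖φ c‖ ^ 2 = (φ y).re ^ 2 + ((φ y).im + t) ^ 2 := by
      rw [Complex.sq_norm, Complex.normSq_apply, hφc]
      simp
      ring
    nlinarith [norm_nonneg (φ c), norm_nonneg c]
  by_contra h
  set β := (φ y).im with hβ
  have h2 : ∀ t : ℝ, 2 * β * t ≤ ‖y‖ ^ 2 := by
    intro t
    have := key t
    nlinarith [sq_nonneg ((φ y).re)]
  have h3 := h2 ((‖y‖ ^ 2 + 1) / (2 * β))
  rw [mul_div_cancel₀] at h3
  · linarith
  · intro hc; exact h (by simpa using hc)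

lemma norm_smul_one_sub_star_mul_self_le [Nontrivial A] (a : A) :
    ‖(‖star a * a‖ : ℂ) • (1 : A) - star a * a‖ ≤ ‖star a * a‖ := by
  letI : CStarAlgebra A := { }
  set x := star a * a with hx
  set M : ℝ := ‖x‖ with hM
  set y : A := (M : ℂ) • (1 : A) - x with hy
  have hxsa : IsSelfAdjoint x := IsSelfAdjoint.star_mul_self a
  have hysa : IsSelfAdjoint y := by
    rw [hy]
    refine IsSelfAdjoint.sub ?_ hxsa
    rw [IsSelfAdjoint, star_smul, star_one]
    norm_num
  have hspec : ∀ z ∈ spectrum ℂ y, ‖z‖ ≤ M := by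
    intro z hz
    have hmem : z ∈ ({((M : ℂ))} : Set ℂ) - spectrum ℂ x := by
      rw [spectrum.singleton_sub_eq, Algebra.algebraMap_eq_smul_one]
      exact hz
    rw [Set.mem_sub] at hmem
    obtain ⟨m, hm, w, hw, hzz⟩ := hmem
    rw [Set.mem_singleton_iff] at hm
    subst hm
    subst hzz
    have hwre : w = (w.re : ℂ) := hxsa.mem_spectrum_eq_re hw
    have hwnn : (0 : ℝ) ≤ w.re := by
      have : w.re ∈ spectrum ℝ x := by
        rw [← spectrum.algebraMap_mem_iff ℂ, Complex.coe_algebraMap, ← hwre]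
        exact hw
      exact spectrum_star_mul_self_nonneg w.re this
    have hwle : ‖w‖ ≤ M := spectrum.norm_le_norm_of_mem hw
    have hwle' : |w.re| ≤ M := by
      rw [hwre] at hwle
      simpa [Complex.norm_real] using hwle
    have hcast : ((M:ℂ) - (w.re:ℂ)) = ((M - w.re : ℝ) : ℂ) := by push_cast; ring
    rw [hwre, hcast]
    rw [Complex.norm_real, Real.norm_eq_abs, abs_le]
    have := abs_le.mp hwle'
    constructor <;> linarith
  have hrad : (‖y‖₊ : ℝ≥0∞) = spectralRadius ℂ y := hysa.spectralRadius_eq_nnnorm.symm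
  have hMnn : (0 : ℝ) ≤ M := norm_nonneg x
  have hub : spectralRadius ℂ y ≤ (‖x‖₊ : ℝ≥0∞) := by
    show (⨆ z ∈ spectrum ℂ y, (‖z‖₊ : ℝ≥0∞)) ≤ (‖x‖₊ : ℝ≥0∞)
    refine iSup₂_le fun z hz => ?_
    have h1 : ‖z‖₊ ≤ ‖x‖₊ := by
      have := hspec z hz
      rw [hM] at this
      exact_mod_cast this
    exact_mod_cast ENNReal.coe_le_coe.mpr h1
  rw [← hrad] at hub
  have h2 : ‖y‖₊ ≤ ‖x‖₊ := by exact_mod_cast hub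
  exact_mod_cast h2

lemma isState_of_norm_le [Nontrivial A] (φ : A →L[ℂ] ℂ) (hφ : ‖φ‖ ≤ 1) (h1 : φ 1 = 1) :
    IsState φ := by
  refine ⟨h1, fun a => ?_⟩
  set x := star a * a with hx
  have hxsa : IsSelfAdjoint x := IsSelfAdjoint.star_mul_self a
  have him : (φ x).im = 0 := im_eq_zero_of_unital_contractive φ hφ h1 hxsa
  have hybd : ‖(‖x‖ : ℂ) • (1 : A) - x‖ ≤ ‖x‖ := norm_smul_one_sub_star_mul_self_le a
  have hφy : φ ((‖x‖ : ℂ) • (1 : A) - x) = (‖x‖ : ℂ) - φ x := by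
    rw [map_sub, map_smul, h1, smul_eq_mul, mul_one]
  have h2 : ‖φ ((‖x‖ : ℂ) • (1 : A) - x)‖ ≤ ‖x‖ := by
    calc ‖φ ((‖x‖ : ℂ) • (1 : A) - x)‖ ≤ ‖φ‖ * ‖(‖x‖ : ℂ) • (1 : A) - x‖ := φ.le_opNorm _
      _ ≤ 1 * ‖x‖ := by
          have := norm_nonneg ((‖x‖ : ℂ) • (1 : A) - x)
          nlinarith [norm_nonneg φ]
      _ = ‖x‖ := one_mul _
  have h3 : (‖x‖ : ℝ) - (φ x).re ≤ ‖x‖ := by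
    calc (‖x‖ : ℝ) - (φ x).re = ((‖x‖ : ℂ) - φ x).re := by simp
      _ ≤ ‖(‖x‖ : ℂ) - φ x‖ := Complex.re_le_norm _
      _ = ‖φ ((‖x‖ : ℂ) • (1 : A) - x)‖ := by rw [hφy]
      _ ≤ ‖x‖ := h2
  rw [Complex.le_def]
  exact ⟨by simpa using (by linarith : (0:ℝ) ≤ (φ x).re), by simp [him]⟩

lemma exists_unital_contractive_apply_eq [Nontrivial A] {b : A} (hb : IsSelfAdjoint b)
    {z : ℂ} (hz : z ∈ spectrum ℂ b) :
    ∃ φ : A →L[ℂ] ℂ, ‖φ‖ ≤ 1 ∧ φ 1 = 1 ∧ φ b = z := by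
  letI : CStarAlgebra A := { }
  haveI : IsStarNormal b := hb.isStarNormal
  obtain ⟨f, hf⟩ := (StarAlgebra.elemental.bijective_characterSpaceToSpectrum b).2 ⟨z, hz⟩
  have hfb : f (⟨b, StarAlgebra.elemental.self_mem ℂ b⟩ : StarAlgebra.elemental ℂ b) = z := by
    have := congrArg Subtype.val hf
    exact this
  haveI : Nontrivial (StarAlgebra.elemental ℂ b) := ⟨1, 0, fun h => (one_ne_zero : (1:A) ≠ 0)
    (by simpa using congrArg (Subtype.val : StarAlgebra.elemental ℂ b → A) h)⟩
  have hnorm1 : ∀ s : StarAlgebra.elemental ℂ b, ‖f s‖ ≤ ‖s‖ := fun s =>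
    spectrum.norm_le_norm_of_mem (AlgHom.apply_mem_spectrum f s)
  set p : Submodule ℂ A := Subalgebra.toSubmodule (StarAlgebra.elemental ℂ b).toSubalgebra with hp
  let g₁ : p →ₗ[ℂ] ℂ :=
    { toFun := fun x => f (⟨x.1, x.2⟩ : StarAlgebra.elemental ℂ b)
      map_add' := by intro x y; rw [← map_add]; rfl
      map_smul' := by intro c x; rw [← map_smul]; rfl }
  let g₀ : p →L[ℂ] ℂ := LinearMap.mkContinuous g₁ 1 (by
    intro x
    rw [one_mul]
    exact hnorm1 ⟨x.1, x.2⟩)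
  obtain ⟨g, hg, hgnorm⟩ := exists_extension_norm_eq p g₀
  refine ⟨g, ?_, ?_, ?_⟩
  · rw [hgnorm]
    exact LinearMap.mkContinuous_norm_le g₁ zero_le_one _
  · have h1 : (1 : A) ∈ p := one_mem (StarAlgebra.elemental ℂ b).toSubalgebra
    have h2 := hg ⟨1, h1⟩
    rw [h2]
    show f (⟨(1:A), h1⟩ : StarAlgebra.elemental ℂ b) = 1
    have h3 : (⟨(1:A), h1⟩ : StarAlgebra.elemental ℂ b) = 1 := rfl
    rw [h3, map_one]
  · have hbp : b ∈ p := StarAlgebra.elemental.self_mem ℂ b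
    have h2 := hg ⟨b, hbp⟩
    rw [h2]
    show f (⟨b, hbp⟩ : StarAlgebra.elemental ℂ b) = z
    exact hfb

lemma exists_spectrum_nnnorm_eq [Nontrivial A] {b : A} (hb : IsSelfAdjoint b) :
    ∃ μ ∈ spectrum ℂ b, ‖μ‖₊ = ‖b‖₊ := by
  letI : CStarAlgebra A := { }
  obtain ⟨μ, hμ, h⟩ := spectrum.exists_nnnorm_eq_spectralRadius (a := b)
  refine ⟨μ, hμ, ?_⟩
  rw [hb.spectralRadius_eq_nnnorm] at h
  exact_mod_cast h

end Aux

/-- If the Monge–Kantorovich metric of a unital Lipschitz pair `(A, L)` is bounded by `D` on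
the state space, then every self-adjoint `a` with `L(a) ≤ 1` is within distance `D` of the
scalars: there is `t ∈ ℝ` with `‖a - t·1‖ ≤ D`. -/
theorem exists_real_smul_one_norm_sub_le (L : A → ℝ≥0∞)
    (hadd : ∀ a b : A, L (a + b) ≤ L a + L b)
    (hsmul : ∀ (t : ℝ) (a : A), L (t • a) = (‖t‖₊ : ℝ≥0∞) * L a)
    (hker : ∀ a : A, IsSelfAdjoint a → (L a = 0 ↔ ∃ t : ℝ, a = t • (1 : A)))
    (D : ℝ≥0)
    (hD : ∀ φ ψ : A →L[ℂ] ℂ, IsState φ → IsState ψ → mkDist L φ ψ ≤ (D : ℝ≥0∞)) :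
    ∀ a : A, IsSelfAdjoint a → L a ≤ 1 → ∃ t : ℝ, ‖a - t • (1 : A)‖ ≤ (D : ℝ) := by
  intro a ha hLa
  by_cases hnt : Nontrivial A
  swap
  · haveI := not_nontrivial_iff_subsingleton.mp hnt
    refine ⟨0, ?_⟩
    have h0 : a - (0:ℝ) • (1:A) = 0 := Subsingleton.elim _ _
    rw [h0, norm_zero]
    exact D.coe_nonneg
  obtain ⟨z₀, hz₀⟩ := spectrum.nonempty a
  obtain ⟨ψ, hψn, hψ1, hψa⟩ := exists_unital_contractive_apply_eq ha hz₀
  have hψst : IsState ψ := isState_of_norm_le ψ hψn hψ1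
  set t : ℝ := (ψ a).re with ht
  have hψa' : ψ a = (t : ℂ) := by
    have him := im_eq_zero_of_unital_contractive ψ hψn hψ1 ha
    exact Complex.ext (by simp [ht]) (by simp [him])
  have hsmul1 : (t : ℝ) • (1 : A) = ((t : ℂ)) • (1 : A) :=
    RCLike.real_smul_eq_coe_smul (K := ℂ) t (1 : A)
  set b : A := a - t • (1:A) with hb
  have hbsa : IsSelfAdjoint b := by
    refine ha.sub ?_
    rw [IsSelfAdjoint, star_smul, star_one, star_trivial]
  obtain ⟨μ, hμmem, hμnorm⟩ := exists_spectrum_nnnorm_eq hbsa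
  obtain ⟨φ, hφn, hφ1, hφb⟩ := exists_unital_contractive_apply_eq hbsa hμmem
  have hφst : IsState φ := isState_of_norm_le φ hφn hφ1
  have hφbval : φ b = φ a - ψ a := by
    rw [hb, map_sub, hψa', hsmul1, map_smul, hφ1, smul_eq_mul, mul_one]
  have key : (‖φ a - ψ a‖₊ : ℝ≥0∞) ≤ (D : ℝ≥0∞) := by
    refine le_trans ?_ (hD φ ψ hφst hψst)
    exact le_iSup₂ (f := fun (c : A) (_ : IsSelfAdjoint c ∧ L c ≤ 1) => (‖φ c - ψ c‖₊ : ℝ≥0∞))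
      a ⟨ha, hLa⟩
  have key' : ‖φ a - ψ a‖ ≤ (D : ℝ) := by
    have : ‖φ a - ψ a‖₊ ≤ D := by exact_mod_cast key
    exact_mod_cast this
  refine ⟨t, ?_⟩
  have hnb : ‖b‖ = ‖φ a - ψ a‖ := by
    have : ‖μ‖ = ‖b‖ := congrArg NNReal.toReal hμnorm
    rw [← this, ← hφb, hφbval]
  rw [← hb] at *
  rw [hnb] at *
  exact key'
end

section
/- Let A be a C*-algebra, μ a state on A, and for a ∈ A define the standard deviation stddev_μ(a) = max{‖π(a) - μ(a)·1‖_{L²(A,μ)}, ‖π(a*) - μ(a*)·1‖_{L²(A,μ)}} via the GNS representation. Then for self-adjoint a, b: stddev_μ(ab) ≤ ‖a‖ · stddev_μ(b) + stddev_μ(a) · ‖b‖. -/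
set_option maxRecDepth 10000


open scoped ComplexOrder

variable {A : Type*} [NormedRing A] [StarRing A] [CStarRing A]
  [NormedAlgebra ℂ A] [CompleteSpace A] [StarModule ℂ A]

/-- The standard deviation of `c ∈ A` under the state `μ`:
`stddev_μ(c) = max{ ‖π(c) - μ(c)1‖_{L²(A,μ)}, ‖π(c*) - μ(c*)1‖_{L²(A,μ)} }`, expressed via
the GNS construction as `max{ √(μ(c*c) - |μ(c)|²), √(μ(cc*) - |μ(c)|²) }`. -/
noncomputable def stddev (μ : A →L[ℂ] ℂ) (c : A) : ℝ :=
  max (Real.sqrt ((μ (star c * c)).re - ‖μ c‖ ^ 2))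
      (Real.sqrt ((μ (c * star c)).re - ‖μ c‖ ^ 2))

section Aux

variable (μ : A →L[ℂ] ℂ)

lemma mu_im (hμpos : ∀ a : A, 0 ≤ μ (star a * a)) (x : A) : (μ (star x * x)).im = 0 := by
  have h := hμpos x
  rw [Complex.le_def] at h
  simpa using h.2.symm

lemma mu_re (hμpos : ∀ a : A, 0 ≤ μ (star a * a)) (x : A) : 0 ≤ (μ (star x * x)).re := by
  have h := hμpos x
  rw [Complex.le_def] at h
  simpa using h.1

lemma mu_star (hμpos : ∀ a : A, 0 ≤ μ (star a * a)) (x : A) :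
    μ (star x) = (starRingEnd ℂ) (μ x) := by
  have key : ∀ y : A, (μ (star y)).im = - (μ y).im := by
    intro y
    have h := mu_im μ hμpos (1 + y)
    have hexp : star (1 + y) * (1 + y) = star y * y + (1 + y + star y) := by
      rw [star_add, star_one]
      noncomm_ring
    rw [hexp] at h
    simp only [map_add, Complex.add_im, mu_im μ hμpos y, map_one] at h
    have h1 : (μ (star 1 * 1)).im = 0 := mu_im μ hμpos 1
    simp only [star_one, one_mul] at h1
    simp only [h1] at h
    linarith [h]
  have key2 : (μ (star x)).re = (μ x).re := by
    have h := key ((Complex.I : ℂ) • x)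
    rw [star_smul, map_smul, map_smul] at h
    simp [Complex.star_def, Complex.conj_I, Complex.mul_im] at h
    linarith [h]
  apply Complex.ext
  · simp only [Complex.conj_re]; exact key2
  · simp only [Complex.conj_im]; exact key x

lemma mu_cs (hμpos : ∀ a : A, 0 ≤ μ (star a * a)) (x y : A) :
    ‖μ (star x * y)‖ ^ 2 ≤ (μ (star x * x)).re * (μ (star y * y)).re := by
  letI core : PreInnerProductSpace.Core ℂ A :=
    { inner := fun x y => μ (star x * y)
      conj_inner_symm := fun x y => by
        have := (mu_star μ hμpos (star y * x)).symm
        simpa [star_mul] using this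
      re_inner_nonneg := fun x => by simpa using mu_re μ hμpos x
      add_left := fun x y z => by simp [star_add, add_mul]
      smul_left := fun x y r => by
        simp [star_smul, smul_mul_assoc, Complex.star_def] }
  letI : Inner ℂ A := core.toInner
  have h := InnerProductSpace.Core.inner_mul_inner_self_le (𝕜 := ℂ) (F := A) x y
  have hsymm : ‖(inner ℂ y x : ℂ)‖ = ‖(inner ℂ x y : ℂ)‖ := by
    rw [← core.conj_inner_symm]
    exact RCLike.norm_conj _
  rw [hsymm] at h
  have hxy : (inner ℂ x y : ℂ) = μ (star x * y) := rfl
  have hxx : (inner ℂ x x : ℂ) = μ (star x * x) := rfl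
  have hyy : (inner ℂ y y : ℂ) = μ (star y * y) := rfl
  rw [hxy, hxx, hyy] at h
  simpa [sq] using h

lemma mu_op_bound (hμpos : ∀ a : A, 0 ≤ μ (star a * a)) (c x : A) :
    (μ (star (c * x) * (c * x))).re ≤ ‖c‖ ^ 2 * (μ (star x * x)).re := by
  letI : CStarAlgebra A :=
    { ‹NormedRing A›, ‹StarRing A›, ‹CStarRing A›, ‹NormedAlgebra ℂ A›, ‹CompleteSpace A›,
      ‹StarModule ℂ A› with }
  letI := CStarAlgebra.spectralOrder A
  haveI := CStarAlgebra.spectralOrderedRing A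
  have h1 : star c * c ≤ algebraMap ℝ A ‖star c * c‖ :=
    IsSelfAdjoint.le_algebraMap_norm_self (IsSelfAdjoint.star_mul_self c)
  have h2 := star_left_conjugate_le_conjugate h1 x
  have hcl : ∀ q ∈ AddSubmonoid.closure (Set.range fun s : A => star s * s), 0 ≤ μ q := by
    intro q hq
    induction hq using AddSubmonoid.closure_induction with
    | mem s hs => obtain ⟨s, rfl⟩ := hs; exact hμpos s
    | zero => simp
    | add s t _ _ hs ht => rw [map_add]; exact add_nonneg hs ht
  obtain ⟨p, hp, hep⟩ := (StarOrderedRing.le_iff _ _).mp h2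
  have hμp : 0 ≤ μ p := hcl p hp
  -- rewrite the big element
  have halg : star x * algebraMap ℝ A ‖star c * c‖ * x
      = ((‖star c * c‖ : ℂ)) • (star x * x) := by
    rw [IsScalarTower.algebraMap_apply ℝ ℂ A, Algebra.algebraMap_eq_smul_one,
      mul_smul_comm, smul_mul_assoc, mul_one]
    norm_num
  have hstar : star (c * x) * (c * x) = star x * (star c * c) * x := by
    rw [star_mul]; noncomm_ring
  have hμeq : μ (star x * (star c * c) * x) + μ p = (‖star c * c‖ : ℂ) * μ (star x * x) := by
    rw [← map_add, ← hep, halg, map_smul, smul_eq_mul]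
  have hre : (μ (star x * (star c * c) * x)).re + (μ p).re
      = ‖star c * c‖ * (μ (star x * x)).re := by
    have := congrArg Complex.re hμeq
    simpa [Complex.add_re, Complex.re_ofReal_mul] using this
  have hpre : 0 ≤ (μ p).re := by
    rw [Complex.le_def] at hμp
    simpa using hμp.1
  have hnorm : ‖star c * c‖ = ‖c‖ ^ 2 := by
    rw [CStarRing.norm_star_mul_self, sq]
  rw [hnorm] at hre
  rw [hstar]
  linarith [hre, hpre]

end Aux

/-- Rieffel's Leibniz inequality for the standard deviation: for a state `μ` on a
C*-algebra `A` and self-adjoint `a, b ∈ A`,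
`stddev_μ(ab) ≤ ‖a‖·stddev_μ(b) + stddev_μ(a)·‖b‖`. -/
theorem stddev_mul_le (μ : A →L[ℂ] ℂ) (hμ1 : μ 1 = 1)
    (hμpos : ∀ a : A, 0 ≤ μ (star a * a))
    (a b : A) (ha : IsSelfAdjoint a) (hb : IsSelfAdjoint b) :
    stddev μ (a * b) ≤ ‖a‖ * stddev μ b + stddev μ a * ‖b‖ := by
  classical
  set n : A → ℝ := fun x => Real.sqrt ((μ (star x * x)).re) with hn
  have hre := mu_re μ hμpos
  have hst := mu_star μ hμpos
  have hcs := mu_cs μ hμpos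
  have hop := mu_op_bound μ hμpos
  have hn_nonneg : ∀ x, 0 ≤ n x := fun x => Real.sqrt_nonneg _
  have hn_sq : ∀ x, n x ^ 2 = (μ (star x * x)).re := fun x => Real.sq_sqrt (hre x)
  -- Cauchy-Schwarz in terms of n
  have hcs' : ∀ x y : A, ‖μ (star x * y)‖ ≤ n x * n y := by
    intro x y
    have h := hcs x y
    have : ‖μ (star x * y)‖ = Real.sqrt (‖μ (star x * y)‖ ^ 2) := by
      rw [Real.sqrt_sq (norm_nonneg _)]
    rw [this, hn, ← Real.sqrt_mul (hre x)]
    exact Real.sqrt_le_sqrt h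
  -- |μ x| ≤ n x
  have hn1 : n 1 = 1 := by
    rw [hn]
    simp [hμ1]
  have habs : ∀ x : A, ‖μ x‖ ≤ n x := by
    intro x
    have h := hcs' 1 x
    rw [hn1, star_one, one_mul, one_mul] at h
    exact h
  -- triangle inequality
  have htri : ∀ x y : A, n (x + y) ≤ n x + n y := by
    intro x y
    have hexp : star (x + y) * (x + y) = star x * x + star y * y + (star x * y + star y * x) := by
      rw [star_add]; noncomm_ring
    have hconj : μ (star y * x) = (starRingEnd ℂ) (μ (star x * y)) := by
      rw [← hst (star x * y)]
      simp [star_mul]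
    have hterm : (μ (star x * y + star y * x)).re ≤ 2 * (n x * n y) := by
      rw [map_add, Complex.add_re, hconj, Complex.conj_re]
      have h1 : (μ (star x * y)).re ≤ ‖μ (star x * y)‖ := Complex.re_le_norm _
      have h2 := hcs' x y
      linarith
    have hsum : (μ (star (x + y) * (x + y))).re ≤ (n x + n y) ^ 2 := by
      rw [hexp, map_add, map_add, Complex.add_re, Complex.add_re]
      have := hn_sq x
      have := hn_sq y
      nlinarith [hterm]
    calc n (x + y) ≤ Real.sqrt ((n x + n y) ^ 2) := Real.sqrt_le_sqrt hsum
    _ = n x + n y := Real.sqrt_sq (by positivity)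
  -- homogeneity
  have hsmul : ∀ (t : ℂ) (x : A), n (t • x) = ‖t‖ * n x := by
    intro t x
    have hexp : star (t • x) * (t • x) = ((starRingEnd ℂ) t * t) • (star x * x) := by
      rw [star_smul, smul_mul_smul_comm]
      simp [Complex.star_def]
    have : (μ (star (t • x) * (t • x))).re = ‖t‖ ^ 2 * (μ (star x * x)).re := by
      rw [hexp, map_smul, smul_eq_mul, mul_comm ((starRingEnd ℂ) t) t, Complex.mul_conj',
        ← Complex.ofReal_pow, Complex.re_ofReal_mul]
    rw [hn]
    simp only [this]
    rw [Real.sqrt_mul (by positivity), Real.sqrt_sq (norm_nonneg t)]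
  -- operator bound
  have hmul : ∀ c x : A, n (c * x) ≤ ‖c‖ * n x := by
    intro c x
    have h := hop c x
    calc n (c * x) ≤ Real.sqrt (‖c‖ ^ 2 * (μ (star x * x)).re) := Real.sqrt_le_sqrt h
    _ = ‖c‖ * n x := by
      rw [Real.sqrt_mul (by positivity), Real.sqrt_sq (norm_nonneg c)]
  -- the "Q" operator
  have hQ : ∀ c : A, (μ (star c * c)).re - ‖μ c‖ ^ 2 = n (c - μ c • 1) ^ 2 := by
    intro c
    have hexp : star (c - μ c • 1) * (c - μ c • 1)
        = star c * c - μ c • star c - (starRingEnd ℂ) (μ c) • c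
          + ((starRingEnd ℂ) (μ c) * μ c) • 1 := by
      rw [star_sub, star_smul, star_one, Complex.star_def]
      rw [sub_mul, mul_sub, mul_sub, smul_mul_assoc, mul_smul_comm, mul_smul_comm,
        smul_mul_assoc, one_mul, smul_smul,
        mul_comm (μ c) ((starRingEnd ℂ) (μ c))]
      simp only [mul_one]
      abel
    have hμc : μ (star (c - μ c • 1) * (c - μ c • 1))
        = μ (star c * c) - (starRingEnd ℂ) (μ c) * μ c := by
      rw [hexp]
      simp only [map_add, map_sub, map_smul, smul_eq_mul, hμ1, mul_one, hst c]
      ring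
    have hnorm : ((starRingEnd ℂ) (μ c) * μ c).re = ‖μ c‖ ^ 2 := by
      rw [mul_comm, Complex.mul_conj', ← Complex.ofReal_pow, Complex.ofReal_re]
    rw [hn_sq, hμc, Complex.sub_re, hnorm]
  -- n (Q c) ≤ n c
  have hQle : ∀ c : A, n (c - μ c • 1) ≤ n c := by
    intro c
    have h := hQ c
    have h2 : n (c - μ c • 1) ^ 2 ≤ n c ^ 2 := by
      rw [← h, hn_sq]
      nlinarith [norm_nonneg (μ c)]
    calc n (c - μ c • 1) = Real.sqrt (n (c - μ c • 1) ^ 2) :=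
          (Real.sqrt_sq (hn_nonneg _)).symm
    _ ≤ Real.sqrt (n c ^ 2) := Real.sqrt_le_sqrt h2
    _ = n c := Real.sqrt_sq (hn_nonneg _)
  -- connection between stddev components and n ∘ Q
  have hconn : ∀ c : A, Real.sqrt ((μ (star c * c)).re - ‖μ c‖ ^ 2) = n (c - μ c • 1) := by
    intro c
    rw [hQ c, Real.sqrt_sq (hn_nonneg _)]
  -- key decomposition estimate
  have hkey : ∀ x y : A,
      n (x * y - μ (x * y) • 1) ≤ ‖x‖ * n (y - μ y • 1) + ‖μ y‖ * n (x - μ x • 1) := by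
    intro x y
    have hz' : x * (y - μ y • 1) = x * y - μ y • x := by
      rw [mul_sub, mul_smul_comm, mul_one]
    have hμz : μ (x * (y - μ y • 1)) = μ (x * y) - μ y * μ x := by
      rw [hz', map_sub, map_smul, smul_eq_mul]
    have hdecomp : x * y - μ (x * y) • 1
        = (x * (y - μ y • 1) - μ (x * (y - μ y • 1)) • 1) + μ y • (x - μ x • 1) := by
      rw [hμz, hz', sub_smul, smul_sub, smul_smul]
      abel
    calc n (x * y - μ (x * y) • 1)
        ≤ n (x * (y - μ y • 1) - μ (x * (y - μ y • 1)) • 1) + n (μ y • (x - μ x • 1)) := by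
          rw [hdecomp]; exact htri _ _
    _ = n (x * (y - μ y • 1) - μ (x * (y - μ y • 1)) • 1) + ‖μ y‖ * n (x - μ x • 1) := by
          rw [hsmul]
    _ ≤ n (x * (y - μ y • 1)) + ‖μ y‖ * n (x - μ x • 1) := by
          have := hQle (x * (y - μ y • 1))
          gcongr
    _ ≤ ‖x‖ * n (y - μ y • 1) + ‖μ y‖ * n (x - μ x • 1) := by
          have := hmul x (y - μ y • 1)
          gcongr
  -- |μ c| ≤ ‖c‖
  have hmubound : ∀ c : A, ‖μ c‖ ≤ ‖c‖ := by
    intro c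
    have h1 := habs c
    have h2 : n c ≤ ‖c‖ := by
      have := hmul c 1
      rw [mul_one, hn1, mul_one] at this
      exact this
    linarith
  -- assemble
  have hab : star (a * b) = b * a := by rw [star_mul, ha.star_eq, hb.star_eq]
  have hba : star (b * a) = a * b := by rw [star_mul, ha.star_eq, hb.star_eq]
  have hμba : μ (b * a) = (starRingEnd ℂ) (μ (a * b)) := by
    rw [← hab, hst]
  have hnorm_ba : ‖μ (b * a)‖ = ‖μ (a * b)‖ := by rw [hμba]; exact RCLike.norm_conj _
  have hsa : stddev μ a = n (a - μ a • 1) := by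
    have h' := hconn a
    rw [ha.star_eq] at h'
    unfold stddev
    rw [ha.star_eq, max_self]
    exact h'
  have hsb : stddev μ b = n (b - μ b • 1) := by
    have h' := hconn b
    rw [hb.star_eq] at h'
    unfold stddev
    rw [hb.star_eq, max_self]
    exact h'
  have h1 : Real.sqrt ((μ (star (a * b) * (a * b))).re - ‖μ (a * b)‖ ^ 2)
      = n (a * b - μ (a * b) • 1) := hconn (a * b)
  have h2 : Real.sqrt ((μ ((a * b) * star (a * b))).re - ‖μ (a * b)‖ ^ 2)
      = n (b * a - μ (b * a) • 1) := by
    rw [hab, ← hnorm_ba, ← hconn (b * a), hba]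
  rw [hsa, hsb]
  unfold stddev
  rw [h1, h2]
  have e1 := hkey a b
  have e2 := hkey b a
  have f1 := hmubound a
  have f2 := hmubound b
  have g1 := hn_nonneg (a - μ a • 1)
  have g2 := hn_nonneg (b - μ b • 1)
  have na := norm_nonneg a
  have nb := norm_nonneg b
  apply max_le
  · nlinarith
  · nlinarith
end

section
/- Let A be a unital C*-algebra, π a faithful unital *-representation on a Hilbert space H, and D a self-adjoint (possibly unbounded) operator on H. Define L(a) = ‖[D, π(a)]‖ (operator norm of the closure of the commutator, ∞ if unbounded) for a ∈ A. Then for every invertible a ∈ A in the domain of L: L(a⁻¹) ≤ ‖a⁻¹‖² · L(a). -/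
open scoped ENNReal NNReal

/-- The strong Leibniz property of commutator Lip-norms from spectral triples: if `π` is a
faithful unital *-representation of a unital C*-algebra `A` on a Hilbert space `H`, `D` is a
symmetric (densely defined, possibly unbounded) operator on `H`, and
`L(a) = ‖[D, π(a)]‖` (the least bound for the commutator, `∞` if none exists), then for
every invertible `a ∈ A` (whose inverse also preserves the domain of `D`),
`L(a⁻¹) ≤ ‖a⁻¹‖² · L(a)`. -/
theorem commutator_lipnorm_strong_leibniz {A H : Type*}
    [NormedRing A] [StarRing A] [CStarRing A] [NormedAlgebra ℂ A]
    [CompleteSpace A] [StarModule ℂ A]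
    [NormedAddCommGroup H] [InnerProductSpace ℂ H] [CompleteSpace H]
    (π : A →⋆ₐ[ℂ] (H →L[ℂ] H)) (hπ : Function.Injective π)
    (dom : Submodule ℂ H) (hdom : Dense (dom : Set H))
    (D : dom →ₗ[ℂ] H)
    (hD : ∀ x y : dom, (inner ℂ (D x) (y : H) : ℂ) = inner ℂ (x : H) (D y))
    (L : A → ℝ≥0∞)
    (hL : ∀ a : A, L a = sInf {C : ℝ≥0∞ |
      (∀ x ∈ dom, π a x ∈ dom) ∧
      ∀ (x : H) (hx : x ∈ dom) (hax : π a x ∈ dom),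
        (‖D ⟨π a x, hax⟩ - π a (D ⟨x, hx⟩)‖₊ : ℝ≥0∞) ≤ C * (‖x‖₊ : ℝ≥0∞)})
    (a : Aˣ)
    (hpre : ∀ x ∈ dom, π (↑a⁻¹ : A) x ∈ dom) :
    L (↑a⁻¹ : A) ≤ (‖(↑a⁻¹ : A)‖₊ : ℝ≥0∞) ^ 2 * L (↑a : A) := by
  letI : CStarAlgebra A := {}
  have hπnorm : ∀ b : A, ‖π b‖₊ ≤ ‖b‖₊ := fun b => NonUnitalStarAlgHom.nnnorm_apply_le π b
  set k : ℝ≥0∞ := (‖(↑a⁻¹ : A)‖₊ : ℝ≥0∞) with hk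
  rw [hL, hL]
  set S := {C : ℝ≥0∞ |
      (∀ x ∈ dom, π (↑a : A) x ∈ dom) ∧
      ∀ (x : H) (hx : x ∈ dom) (hax : π (↑a : A) x ∈ dom),
        (‖D ⟨π (↑a : A) x, hax⟩ - π (↑a : A) (D ⟨x, hx⟩)‖₊ : ℝ≥0∞) ≤ C * (‖x‖₊ : ℝ≥0∞)}
    with hS
  refine sInf_le ⟨hpre, ?_⟩
  intro x hx hax
  have cancel1 : ∀ v : H, π (↑a : A) (π (↑a⁻¹ : A) v) = v := by
    intro v
    have h1 : π (↑a : A) * π (↑a⁻¹ : A) = 1 := by rw [← map_mul, Units.mul_inv, map_one]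
    calc π (↑a : A) (π (↑a⁻¹ : A) v) = (π (↑a : A) * π (↑a⁻¹ : A)) v := rfl
      _ = v := by rw [h1]; rfl
  have cancel2 : ∀ v : H, π (↑a⁻¹ : A) (π (↑a : A) v) = v := by
    intro v
    have h1 : π (↑a⁻¹ : A) * π (↑a : A) = 1 := by rw [← map_mul, Units.inv_mul, map_one]
    calc π (↑a⁻¹ : A) (π (↑a : A) v) = (π (↑a⁻¹ : A) * π (↑a : A)) v := rfl
      _ = v := by rw [h1]; rfl
  set T : H := D ⟨π (↑a⁻¹ : A) x, hax⟩ - π (↑a⁻¹ : A) (D ⟨x, hx⟩) with hT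
  -- the key pointwise estimate, for any C in the defining set of `L a`
  have key : ∀ C ∈ S, (‖T‖₊ : ℝ≥0∞) ≤ (k ^ 2 * (‖x‖₊ : ℝ≥0∞)) * C := by
    rintro C ⟨-, hC⟩
    have hay : π (↑a : A) (π (↑a⁻¹ : A) x) ∈ dom := by rw [cancel1 x]; exact hx
    have hE := hC (π (↑a⁻¹ : A) x) hax hay
    have hsub : (⟨π (↑a : A) (π (↑a⁻¹ : A) x), hay⟩ : dom) = ⟨x, hx⟩ :=
      Subtype.ext (cancel1 x)
    rw [hsub] at hE
    set E : H := D ⟨x, hx⟩ - π (↑a : A) (D ⟨π (↑a⁻¹ : A) x, hax⟩) with hEdef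
    have hTE : T = -(π (↑a⁻¹ : A) E) := by
      rw [hEdef, map_sub, cancel2, neg_sub]
    have h1 : ‖T‖₊ ≤ ‖(↑a⁻¹ : A)‖₊ * ‖E‖₊ := by
      rw [hTE, nnnorm_neg]
      exact (ContinuousLinearMap.le_opNNNorm _ _).trans (mul_le_mul_left (hπnorm _) _)
    have hy : ‖π (↑a⁻¹ : A) x‖₊ ≤ ‖(↑a⁻¹ : A)‖₊ * ‖x‖₊ :=
      (ContinuousLinearMap.le_opNNNorm _ _).trans (mul_le_mul_left (hπnorm _) _)
    calc (‖T‖₊ : ℝ≥0∞) ≤ ((‖(↑a⁻¹ : A)‖₊ * ‖E‖₊ : ℝ≥0) : ℝ≥0∞) := by exact_mod_cast h1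
      _ = k * (‖E‖₊ : ℝ≥0∞) := by rw [ENNReal.coe_mul]
      _ ≤ k * (C * (‖π (↑a⁻¹ : A) x‖₊ : ℝ≥0∞)) := mul_le_mul_right hE _
      _ ≤ k * (C * (k * (‖x‖₊ : ℝ≥0∞))) := by
          refine mul_le_mul_right (mul_le_mul_right ?_ _) _
          rw [hk, ← ENNReal.coe_mul]
          exact_mod_cast hy
      _ = (k ^ 2 * (‖x‖₊ : ℝ≥0∞)) * C := by ring
  by_cases hT0 : ‖T‖₊ = 0
  · rw [hT0]
    simp
  have hk0 : k ≠ 0 := by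
    simp only [hk, Ne, ENNReal.coe_eq_zero, nnnorm_eq_zero]
    intro h
    apply hT0
    have hall : ∀ v : H, v = 0 := by
      intro v
      have := cancel1 v
      rw [h, map_zero] at this
      simpa using this.symm
    rw [nnnorm_eq_zero]
    exact hall T
  have hx0 : (‖x‖₊ : ℝ≥0∞) ≠ 0 := by
    simp only [Ne, ENNReal.coe_eq_zero, nnnorm_eq_zero]
    intro h
    apply hT0
    have h2 : π (↑a⁻¹ : A) x = 0 := by rw [h, map_zero]
    have hq : (⟨x, hx⟩ : dom) = 0 := Subtype.ext h
    have hp : (⟨π (↑a⁻¹ : A) x, hax⟩ : dom) = 0 := Subtype.ext h2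
    rw [nnnorm_eq_zero, hT, hp, hq]
    simp
  set c : ℝ≥0∞ := k ^ 2 * (‖x‖₊ : ℝ≥0∞) with hc
  have hc0 : c ≠ 0 := mul_ne_zero (pow_ne_zero 2 hk0) hx0
  have hctop : c ≠ ∞ :=
    ENNReal.mul_ne_top (ENNReal.pow_ne_top ENNReal.coe_ne_top) ENNReal.coe_ne_top
  have hdiv : (‖T‖₊ : ℝ≥0∞) / c ≤ sInf S := by
    refine le_sInf fun C hC => ?_
    rw [ENNReal.div_le_iff hc0 hctop]
    exact (key C hC).trans_eq (mul_comm _ _)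
  have := (ENNReal.div_le_iff hc0 hctop).1 hdiv
  calc (‖T‖₊ : ℝ≥0∞) ≤ sInf S * c := this
    _ = k ^ 2 * sInf S * (‖x‖₊ : ℝ≥0∞) := by rw [hc]; ring
end

section
/- Let (A, L) be a unital Lipschitz pair such that the set {a ∈ sa(A) : L(a) ≤ 1, ‖a‖ ≤ 1} is totally bounded in norm and the Monge–Kantorovich metric mk_L has finite diameter on S(A). Then for any state μ ∈ S(A), the set {a ∈ sa(A) : L(a) ≤ 1, μ(a) = 0} is totally bounded in norm. -/
open scoped ENNReal NNReal ComplexOrder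

variable {A : Type*} [NormedRing A] [StarRing A] [CStarRing A]
  [NormedAlgebra ℂ A] [CompleteSpace A] [StarModule ℂ A]

open scoped Pointwise

set_option linter.unusedSectionVars false

/-- norm-attaining spectral value for selfadjoint elements. -/
lemma exists_spec_norm [Nontrivial A] {a : A} (ha : IsSelfAdjoint a) :
    ∃ z ∈ spectrum ℂ a, ‖z‖ = ‖a‖ := by
  letI : CStarAlgebra A := ⟨⟩
  obtain ⟨z, hz, hmax⟩ := (spectrum.isCompact (𝕜 := ℂ) a).exists_isMaxOn
    (spectrum.nonempty a) (continuous_norm.continuousOn)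
  refine ⟨z, hz, le_antisymm (spectrum.norm_le_norm_of_mem hz) ?_⟩
  have h1 : (‖a‖₊ : ℝ≥0∞) = spectralRadius ℂ a := ha.spectralRadius_eq_nnnorm.symm
  have h2 : spectralRadius ℂ a ≤ (‖z‖₊ : ℝ≥0∞) := by
    refine iSup₂_le fun w hw => ?_
    exact_mod_cast hmax hw
  have := h1.le.trans h2
  exact_mod_cast this

lemma exists_unital_functional [Nontrivial A] {a : A} {z : ℂ}
    (hz : z ∈ spectrum ℂ a) (hind : LinearIndependent ℂ ![(1 : A), a]) :
    ∃ φ : A →L[ℂ] ℂ, ‖φ‖ ≤ 1 ∧ φ 1 = 1 ∧ φ a = z := by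
  set M : Submodule ℂ A := Submodule.span ℂ (Set.range ![(1 : A), a]) with hM
  let b : Module.Basis (Fin 2) ℂ M := Module.Basis.span hind
  let g : M →ₗ[ℂ] ℂ := b.constr ℂ ![(1 : ℂ), z]
  have hb0 : ((b 0 : M) : A) = 1 := congrArg Subtype.val (Module.Basis.span_apply hind 0)
  have hb1 : ((b 1 : M) : A) = a := congrArg Subtype.val (Module.Basis.span_apply hind 1)
  have key : ∀ x : M, ‖g x‖ ≤ 1 * ‖x‖ := by
    intro x
    set c0 : ℂ := b.repr x 0
    set c1 : ℂ := b.repr x 1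
    have hx : (x : A) = c0 • (1 : A) + c1 • a := by
      conv_lhs => rw [← b.sum_repr x]
      simp only [Submodule.coe_sum, Fin.sum_univ_two, Submodule.coe_add, Submodule.coe_smul, hb0, hb1, c0, c1]
    have hg : g x = c0 + c1 * z := by
      simp [g, Module.Basis.constr_apply, Fin.sum_univ_two, c0, c1, smul_eq_mul, mul_one]
    rw [one_mul, hg]
    rcases eq_or_ne c1 0 with h1 | h1
    · have : (x : A) = c0 • (1 : A) := by rw [hx, h1]; simp
      have : ‖(x : A)‖ = ‖c0‖ := by rw [this, norm_smul, norm_one, mul_one]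
      rw [h1]; simp [this.symm]
    · have hmem : c0 + c1 * z ∈ spectrum ℂ ((x : A)) := by
        rw [hx]
        have h2 : c1 * z ∈ spectrum ℂ (c1 • a) := by
          have := (spectrum.smul_mem_smul_iff (a := a) (s := z)
            (r := Units.mk0 c1 h1)).mpr hz
          simpa [Units.smul_def, smul_eq_mul] using this
        have h3 := (spectrum.add_mem_add_iff (a := c1 • a) (s := c0) (r := c1 * z)).mpr h2
        rw [add_comm c0 (c1 * z)]
        convert h3 using 2
        rw [Algebra.algebraMap_eq_smul_one]
      exact spectrum.norm_le_norm_of_mem hmem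
  let gc : M →L[ℂ] ℂ := g.mkContinuous 1 key
  obtain ⟨φ, hext, hnorm⟩ := exists_extension_norm_eq M gc
  have h1M : (1 : A) ∈ M := Submodule.subset_span ⟨0, rfl⟩
  have haM : a ∈ M := Submodule.subset_span ⟨1, rfl⟩
  refine ⟨φ, ?_, ?_, ?_⟩
  · rw [hnorm]
    exact g.mkContinuous_norm_le zero_le_one key
  · have := hext ⟨1, h1M⟩
    rw [this]
    show g ⟨1, h1M⟩ = 1
    have : (⟨1, h1M⟩ : M) = b 0 := by ext; rw [hb0]
    rw [this]
    simp [g, Module.Basis.constr_basis]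
  · have := hext ⟨a, haM⟩
    rw [this]
    show g ⟨a, haM⟩ = z
    have : (⟨a, haM⟩ : M) = b 1 := by ext; rw [hb1]
    rw [this]
    simp [g, Module.Basis.constr_basis]

set_option linter.unusedSectionVars false

lemma im_apply_eq_zero [Nontrivial A] (φ : A →L[ℂ] ℂ) (hn : ‖φ‖ ≤ 1) (h1 : φ 1 = 1) {b : A}
    (hb : IsSelfAdjoint b) : (φ b).im = 0 := by
  set s : ℝ := (φ b).re
  set u : ℝ := (φ b).im
  have key : ∀ t : ℝ, s ^ 2 + (u + t) ^ 2 ≤ ‖b‖ ^ 2 + t ^ 2 := by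
    intro t
    have hstar : star (b + ((t : ℂ) * Complex.I) • (1 : A)) =
        b - ((t : ℂ) * Complex.I) • (1 : A) := by
      simp [star_smul, hb.star_eq, Complex.ext_iff, sub_eq_add_neg, ← neg_smul]
    have hprod : star (b + ((t : ℂ) * Complex.I) • (1 : A)) *
        (b + ((t : ℂ) * Complex.I) • (1 : A)) = b * b + ((t : ℂ) ^ 2) • (1 : A) := by
      rw [hstar]
      simp only [mul_add, sub_mul, smul_mul_assoc, mul_smul_comm, one_mul, mul_one,
        smul_sub, smul_smul]
      have hI : ((t : ℂ) * Complex.I) * ((t : ℂ) * Complex.I) = -((t : ℂ) ^ 2) := by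
        ring_nf; rw [Complex.I_sq]; ring
      rw [hI]
      module
    have hnormsq : ‖b + ((t : ℂ) * Complex.I) • (1 : A)‖ ^ 2 ≤ ‖b‖ ^ 2 + t ^ 2 := by
      have hcs : ‖b + ((t : ℂ) * Complex.I) • (1 : A)‖ ^ 2 =
          ‖star (b + ((t : ℂ) * Complex.I) • (1 : A)) *
            (b + ((t : ℂ) * Complex.I) • (1 : A))‖ := by
        rw [CStarRing.norm_star_mul_self, sq]
      rw [hcs, hprod]
      calc ‖b * b + ((t : ℂ) ^ 2) • (1 : A)‖ ≤ ‖b * b‖ + ‖((t : ℂ) ^ 2) • (1 : A)‖ :=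
            norm_add_le _ _
        _ ≤ ‖b‖ ^ 2 + t ^ 2 := by
            have h1' : ‖b * b‖ = ‖b‖ ^ 2 := by
              have := CStarRing.norm_star_mul_self (x := b)
              rw [hb.star_eq] at this
              rw [this, sq]
            have h2' : ‖((t : ℂ) ^ 2) • (1 : A)‖ ≤ t ^ 2 := by
              rw [norm_smul, norm_one, mul_one, norm_pow, Complex.norm_real,
                Real.norm_eq_abs, sq_abs]
            linarith
    have happ : φ (b + ((t : ℂ) * Complex.I) • (1 : A)) =
        Complex.mk s (u + t) := by
      rw [map_add, map_smul, h1, smul_eq_mul, mul_one]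
      apply Complex.ext <;> simp [s, u] <;> ring
    have hle : ‖φ (b + ((t : ℂ) * Complex.I) • (1 : A))‖ ≤
        ‖b + ((t : ℂ) * Complex.I) • (1 : A)‖ := by
      calc ‖φ (b + ((t : ℂ) * Complex.I) • (1 : A))‖
          ≤ ‖φ‖ * ‖b + ((t : ℂ) * Complex.I) • (1 : A)‖ := φ.le_opNorm _
        _ ≤ 1 * ‖b + ((t : ℂ) * Complex.I) • (1 : A)‖ := by
            gcongr
        _ = _ := one_mul _
    have hsq : ‖φ (b + ((t : ℂ) * Complex.I) • (1 : A))‖ ^ 2 = s ^ 2 + (u + t) ^ 2 := by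
      rw [happ, Complex.sq_norm, Complex.normSq_mk]
      ring
    have hp := pow_le_pow_left₀ (norm_nonneg (φ (b + ((t : ℂ) * Complex.I) • (1 : A)))) hle 2
    linarith
  by_contra hu
  have ht := key ((‖b‖ ^ 2 + 1) / (2 * u))
  have h2u : 2 * u ≠ 0 := by simpa using hu
  have : u * ((‖b‖ ^ 2 + 1) / (2 * u)) = (‖b‖ ^ 2 + 1) / 2 := by
    field_simp
  nlinarith [sq_nonneg s, sq_nonneg u]

lemma isState_of_unital_contraction [Nontrivial A] (φ : A →L[ℂ] ℂ)
    (hn : ‖φ‖ ≤ 1) (h1 : φ 1 = 1) : IsState φ := by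
  refine ⟨h1, fun x => ?_⟩
  letI : CStarAlgebra A := ⟨⟩
  set b : A := star x * x with hbdef
  have hb : IsSelfAdjoint b := IsSelfAdjoint.star_mul_self x
  have him : (φ b).im = 0 := im_apply_eq_zero φ hn h1 hb
  set c : A := b - (‖b‖ : ℂ) • (1 : A) with hcdef
  have hc : IsSelfAdjoint c := by
    rw [hcdef]
    refine hb.sub ?_
    rw [IsSelfAdjoint, star_smul, star_one, Complex.star_def, Complex.conj_ofReal]
  have hcnorm : ‖c‖ ≤ ‖b‖ := by
    have hbound : spectralRadius ℂ c ≤ (‖b‖₊ : ℝ≥0∞) := by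
      refine iSup₂_le fun z hz => ?_
      have hz' : z ∈ spectrum ℂ b - {(‖b‖ : ℂ)} := by
        rw [spectrum.sub_singleton_eq, Algebra.algebraMap_eq_smul_one]
        exact hz
      rw [Set.mem_sub] at hz'
      obtain ⟨w, hw, r, hr, hwz⟩ := hz'
      rw [Set.mem_singleton_iff] at hr
      subst hr
      subst hwz
      have hre : w = (w.re : ℂ) := hb.mem_spectrum_eq_re hw
      have hw' := hw
      rw [hre] at hw'
      have hnn : (0 : ℝ) ≤ w.re :=
        spectrum_star_mul_self_nonneg _ (spectrum.of_algebraMap_mem ℂ (by simpa using hw'))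
      have hub : ‖w‖ ≤ ‖b‖ := spectrum.norm_le_norm_of_mem hw
      have hub' : |w.re| ≤ ‖b‖ := by
        rw [hre] at hub
        simpa [Complex.norm_real, Real.norm_eq_abs] using hub
      have hkey : ‖w - (‖b‖ : ℂ)‖ ≤ ‖b‖ := by
        rw [hre, ← Complex.ofReal_sub, Complex.norm_real, Real.norm_eq_abs, abs_le]
        rw [abs_le] at hub'
        constructor <;> linarith
      exact_mod_cast hkey
    have hrad : (‖c‖₊ : ℝ≥0∞) = spectralRadius ℂ c := hc.spectralRadius_eq_nnnorm.symm
    have := hrad.le.trans hbound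
    exact_mod_cast this
  have hφc : ‖φ c‖ ≤ ‖b‖ := by
    calc ‖φ c‖ ≤ ‖φ‖ * ‖c‖ := φ.le_opNorm c
      _ ≤ 1 * ‖b‖ := by
          apply mul_le_mul hn hcnorm (norm_nonneg c) zero_le_one
      _ = ‖b‖ := one_mul _
  have hφcval : φ c = φ b - (‖b‖ : ℂ) := by
    rw [hcdef, map_sub, map_smul, h1, smul_eq_mul, mul_one]
  have hres : |(φ b).re - ‖b‖| ≤ ‖b‖ := by
    have h2 : |(φ c).re| ≤ ‖φ c‖ := Complex.abs_re_le_norm _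
    have h3 : (φ c).re = (φ b).re - ‖b‖ := by rw [hφcval]; simp
    rw [h3] at h2
    linarith
  rw [abs_le] at hres
  rw [Complex.le_def]
  exact ⟨by simpa using (by linarith [hres.1] : (0:ℝ) ≤ (φ b).re), by simp [him]⟩

lemma indep_of_not_real_smul_one [Nontrivial A] {a : A} (ha : IsSelfAdjoint a)
    (h : ¬∃ t : ℝ, a = t • (1 : A)) : LinearIndependent ℂ ![(1 : A), a] := by
  rw [LinearIndependent.pair_iff' (one_ne_zero)]
  intro cc hcc
  have hstar : (starRingEnd ℂ) cc • (1 : A) = cc • (1 : A) := by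
    conv_rhs => rw [hcc, ← ha.star_eq, ← hcc]
    rw [star_smul, star_one, Complex.star_def]
  have hreal : (starRingEnd ℂ) cc = cc := by
    have h0 : ((starRingEnd ℂ) cc - cc) • (1 : A) = 0 := by
      rw [sub_smul, hstar, sub_self]
    rcases smul_eq_zero.mp h0 with h' | h'
    · exact sub_eq_zero.mp h'
    · exact absurd h' one_ne_zero
  refine h ⟨cc.re, ?_⟩
  have hcre : cc = (cc.re : ℂ) := (Complex.conj_eq_iff_re.mp hreal).symm
  rw [← hcc, hcre]
  rfl

lemma norm_le_D {A : Type*} [NormedRing A] [StarRing A] [CStarRing A]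
  [NormedAlgebra ℂ A] [CompleteSpace A] [StarModule ℂ A] [Nontrivial A]
    (L : A → ℝ≥0∞) (D : ℝ≥0)
    (hD : ∀ φ ψ : A →L[ℂ] ℂ, IsState φ → IsState ψ → mkDist L φ ψ ≤ (D : ℝ≥0∞))
    (μ : A →L[ℂ] ℂ) (hμ : IsState μ) {a : A} (hsa : IsSelfAdjoint a) (hL : L a ≤ 1)
    (hμa : μ a = 0) : ‖a‖ ≤ D := by
  by_cases hmul : ∃ t : ℝ, a = t • (1 : A)
  · obtain ⟨t, rfl⟩ := hmul
    have : μ ((t : ℝ) • (1 : A)) = t := by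
      have : ((t : ℝ) • (1 : A)) = (t : ℂ) • (1 : A) := rfl
      rw [this, map_smul, hμ.1, smul_eq_mul, mul_one]
    rw [this] at hμa
    norm_cast at hμa
    subst hμa
    simp
  · obtain ⟨z, hz, hznorm⟩ := exists_spec_norm hsa
    obtain ⟨φ, hφn, hφ1, hφa⟩ := exists_unital_functional hz
      (indep_of_not_real_smul_one hsa hmul)
    have hφs : IsState φ := isState_of_unital_contraction φ hφn hφ1
    have hle : (‖a‖₊ : ℝ≥0∞) ≤ (D : ℝ≥0∞) := by
      calc (‖a‖₊ : ℝ≥0∞) = (‖φ a - μ a‖₊ : ℝ≥0∞) := by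
            rw [hμa, sub_zero, hφa]
            have h' : ‖a‖₊ = ‖z‖₊ := NNReal.coe_injective (by simpa using hznorm.symm)
            exact_mod_cast congrArg ENNReal.ofNNReal h'
        _ ≤ mkDist L φ μ := by
            refine le_iSup₂ (f := fun (a : A) (_ : IsSelfAdjoint a ∧ L a ≤ 1) =>
              (‖φ a - μ a‖₊ : ℝ≥0∞)) a ⟨hsa, hL⟩
        _ ≤ (D : ℝ≥0∞) := hD φ μ hφs hμ
    exact_mod_cast hle

/-- If `(A, L)` is a unital Lipschitz pair for which
`{a ∈ sa(A) : L(a) ≤ 1, ‖a‖ ≤ 1}` is totally bounded in norm and whose Monge–Kantorovich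
metric has finite diameter (bounded by `D`) on the state space, then for every state `μ`
the set `{a ∈ sa(A) : L(a) ≤ 1, μ(a) = 0}` is totally bounded in norm. -/
theorem totallyBounded_centered_of_totallyBounded_ball (L : A → ℝ≥0∞)
    (hadd : ∀ a b : A, L (a + b) ≤ L a + L b)
    (hsmul : ∀ (t : ℝ) (a : A), L (t • a) = (‖t‖₊ : ℝ≥0∞) * L a)
    (hker : ∀ a : A, IsSelfAdjoint a → (L a = 0 ↔ ∃ t : ℝ, a = t • (1 : A)))
    (htb : TotallyBounded {a : A | IsSelfAdjoint a ∧ L a ≤ 1 ∧ ‖a‖ ≤ 1})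
    (D : ℝ≥0)
    (hD : ∀ φ ψ : A →L[ℂ] ℂ, IsState φ → IsState ψ → mkDist L φ ψ ≤ (D : ℝ≥0∞)) :
    ∀ μ : A →L[ℂ] ℂ, IsState μ →
      TotallyBounded {a : A | IsSelfAdjoint a ∧ L a ≤ 1 ∧ μ a = 0} := by
  intro μ hμ
  rcases subsingleton_or_nontrivial A with hA | hA
  · exact (Set.toFinite _).totallyBounded
  have hbd : ∀ a : A, IsSelfAdjoint a → L a ≤ 1 → μ a = 0 → ‖a‖ ≤ D := fun a h1 h2 h3 =>
    norm_le_D L D hD μ hμ h1 h2 h3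
  set C : ℝ := (D : ℝ) + 1 with hC
  have hC1 : (1 : ℝ) ≤ C := by
    have := D.coe_nonneg
    simp only [hC]; linarith
  have hCpos : (0 : ℝ) < C := lt_of_lt_of_le one_pos hC1
  have huc : UniformContinuous fun x : A => C • x :=
    (C • ContinuousLinearMap.id ℝ A).uniformContinuous
  refine TotallyBounded.subset ?_ (htb.image huc)
  rintro a ⟨h1, h2, h3⟩
  have hna : ‖a‖ ≤ D := hbd a h1 h2 h3
  refine ⟨C⁻¹ • a, ⟨?_, ?_, ?_⟩, ?_⟩
  · exact IsSelfAdjoint.smul (star_trivial _) h1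
  · rw [hsmul]
    have hc1 : (‖(C⁻¹ : ℝ)‖₊ : ℝ≥0∞) ≤ 1 := by
      rw [ENNReal.coe_le_one_iff, ← NNReal.coe_le_coe]
      simp only [coe_nnnorm, Real.norm_eq_abs, NNReal.coe_one]
      rw [abs_of_pos (inv_pos.mpr hCpos)]
      exact inv_le_one_of_one_le₀ hC1
    exact mul_le_one' hc1 h2
  · rw [norm_smul, Real.norm_eq_abs, abs_of_pos (inv_pos.mpr hCpos)]
    calc C⁻¹ * ‖a‖ ≤ C⁻¹ * C :=
          mul_le_mul_of_nonneg_left (hna.trans (by simp [hC])) (inv_pos.mpr hCpos).le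
      _ = 1 := inv_mul_cancel₀ (ne_of_gt hCpos)
  · show C • (C⁻¹ • a) = a
    rw [smul_smul, mul_inv_cancel₀ (ne_of_gt hCpos), one_smul]
end
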